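/- Let P be a finite poset that is 2-wide, parity-graded with parity rank function μ, and downward Eulerian, and let f : P → ℝ be a discrete Morse function. Let N₀ (resp. N₁) be the number of critical elements x with μ(x) = 0 (resp. μ(x) = 1). Then N₀ − N₁ = χ(Δ(P)), where χ(Δ(P)) = Σ over all nonempty chains C of P of (−1)^{|C|−1} is the Euler characteristic of the order complex of P. -/

import Mathlib

open Finset
open scoped Classical

variable {P : Type*}

/-- `P` is 2-wide: whenever `a ⋖ b ⋖ c` there is `d ≠ b` with `a ⋖ d ⋖ c`. -/
def TwoWide (P : Type*) [PartialOrder P] : Prop :=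
  ∀ a b c : P, a ⋖ b → b ⋖ c → ∃ d, d ≠ b ∧ a ⋖ d ∧ d ⋖ c

/-- `f` is a discrete Morse function. -/
def IsDMF [PartialOrder P] (f : P → ℝ) : Prop :=
  ∀ b : P, {a | a ⋖ b ∧ f b ≤ f a}.Subsingleton ∧ {c | b ⋖ c ∧ f c ≤ f b}.Subsingleton

/-- `b` is (discrete-)critical for `f`. -/
def IsCrit [PartialOrder P] (f : P → ℝ) (b : P) : Prop :=
  (∀ a, a ⋖ b → f a < f b) ∧ (∀ c, b ⋖ c → f b < f c)

/-- `μ` is a parity rank function. -/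
def ParityRank [PartialOrder P] (μ : P → ℕ) : Prop :=
  (∀ a, μ a ≤ 1) ∧ (∀ a, IsMin a → μ a = 0) ∧ ∀ a b : P, a ⋖ b → μ b = 1 - μ a

/-- Sum of `(-1)^(length C)` over all nonempty chains `C` of `P` satisfying `p`. -/
noncomputable def chainSum [PartialOrder P] [Fintype P] (p : Finset P → Prop) : ℤ :=
  ∑ C ∈ Finset.univ.filter
      (fun C : Finset P => C.Nonempty ∧ IsChain (· ≤ ·) (↑C : Set P) ∧ p C),
    (-1 : ℤ) ^ (C.card - 1)

/-- `P` is downward Eulerian with respect to `μ`. -/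
def DownEulerian [PartialOrder P] [Fintype P] (μ : P → ℕ) : Prop :=
  ∀ a : P, ¬ IsMin a →
    chainSum (fun C => ∀ x ∈ C, x < a) = (-1 : ℤ) ^ (μ a + 1) + 1

private lemma forman_aux [PartialOrder P] {f : P → ℝ} (hw : TwoWide P) (hf : IsDMF f)
    {a b c : P} (hab : a ⋖ b) (h1 : f b ≤ f a) (hbc : b ⋖ c) (h2 : f c ≤ f b) : False := by
  obtain ⟨d, hdb, had, hdc⟩ := hw a b c hab hbc
  by_cases hd : f d ≤ f a
  · exact hdb ((hf a).2 (Set.mem_setOf.2 ⟨had, hd⟩) (Set.mem_setOf.2 ⟨hab, h1⟩))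
  · exact hdb ((hf c).1
      (Set.mem_setOf.2 ⟨hdc, (h2.trans h1).trans (le_of_lt (not_le.1 hd))⟩)
      (Set.mem_setOf.2 ⟨hbc, h2⟩))

private lemma eum_aux [PartialOrder P] {f : P → ℝ} (hw : TwoWide P) (hf : IsDMF f)
    {x : P} (hx : ¬ IsCrit f x) :
    ∃! y, (x ⋖ y ∧ f y ≤ f x) ∨ (y ⋖ x ∧ f x ≤ f y) := by
  have hex : ∃ y, (x ⋖ y ∧ f y ≤ f x) ∨ (y ⋖ x ∧ f x ≤ f y) := by
    unfold IsCrit at hx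
    push_neg at hx
    by_cases h1 : ∀ a, a ⋖ x → f a < f x
    · obtain ⟨c, hc, hfc⟩ := hx h1
      exact ⟨c, Or.inl ⟨hc, hfc⟩⟩
    · push_neg at h1
      obtain ⟨a, ha, hfa⟩ := h1
      exact ⟨a, Or.inr ⟨ha, hfa⟩⟩
  obtain ⟨y, hy⟩ := hex
  refine ⟨y, hy, fun z hz => ?_⟩
  rcases hy with ⟨h1, h2⟩ | ⟨h1, h2⟩ <;> rcases hz with ⟨h3, h4⟩ | ⟨h3, h4⟩
  · exact (hf x).2 (Set.mem_setOf.2 ⟨h3, h4⟩) (Set.mem_setOf.2 ⟨h1, h2⟩)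
  · exact (forman_aux hw hf h3 h4 h1 h2).elim
  · exact (forman_aux hw hf h1 h2 h3 h4).elim
  · exact (hf x).1 (Set.mem_setOf.2 ⟨h3, h4⟩) (Set.mem_setOf.2 ⟨h1, h2⟩)

/-- For each `a`, the signed count of chains with maximum `a`. -/
private lemma fiber_aux [PartialOrder P] [Fintype P] (a : P) :
    ∑ C ∈ Finset.univ.filter (fun C : Finset P =>
        (C.Nonempty ∧ IsChain (· ≤ ·) (↑C : Set P) ∧ True) ∧ a ∈ C ∧ ∀ x ∈ C, x ≤ a),
      (-1 : ℤ) ^ (C.card - 1)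
    = 1 - chainSum (fun C => ∀ x ∈ C, x < a) := by
  classical
  have hbij : ∑ C ∈ Finset.univ.filter (fun C : Finset P =>
        (C.Nonempty ∧ IsChain (· ≤ ·) (↑C : Set P) ∧ True) ∧ a ∈ C ∧ ∀ x ∈ C, x ≤ a),
      (-1 : ℤ) ^ (C.card - 1)
      = ∑ D ∈ Finset.univ.filter (fun D : Finset P =>
          IsChain (· ≤ ·) (↑D : Set P) ∧ ∀ x ∈ D, x < a), (-1 : ℤ) ^ D.card := by
    refine Finset.sum_bij' (fun C _ => C.erase a) (fun D _ => insert a D) ?_ ?_ ?_ ?_ ?_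
    · intro C hC
      obtain ⟨-, ⟨hne, hch, -⟩, hmem, hle⟩ := Finset.mem_filter.1 hC
      refine Finset.mem_filter.2 ⟨Finset.mem_univ _, ?_, ?_⟩
      · exact hch.mono (Finset.coe_subset.2 (Finset.erase_subset a C))
      · intro x hx
        exact lt_of_le_of_ne (hle x (Finset.mem_of_mem_erase hx)) (Finset.ne_of_mem_erase hx)
    · intro D hD
      obtain ⟨-, hch, hlt⟩ := Finset.mem_filter.1 hD
      refine Finset.mem_filter.2 ⟨Finset.mem_univ _, ⟨⟨a, Finset.mem_insert_self a D⟩, ?_, trivial⟩,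
        Finset.mem_insert_self a D, ?_⟩
      · rw [Finset.coe_insert]
        exact hch.insert (fun b hb _ => Or.inr (hlt b hb).le)
      · intro x hx
        rcases Finset.mem_insert.1 hx with rfl | hx
        · exact le_rfl
        · exact (hlt x hx).le
    · intro C hC
      obtain ⟨-, -, hmem, -⟩ := Finset.mem_filter.1 hC
      exact Finset.insert_erase hmem
    · intro D hD
      obtain ⟨-, -, hlt⟩ := Finset.mem_filter.1 hD
      exact Finset.erase_insert (fun h => lt_irrefl a (hlt a h))
    · intro C hC
      obtain ⟨-, -, hmem, -⟩ := Finset.mem_filter.1 hC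
      rw [Finset.card_erase_of_mem hmem]
  rw [hbij, ← Finset.sum_filter_add_sum_filter_not
    (Finset.univ.filter (fun D : Finset P =>
      IsChain (· ≤ ·) (↑D : Set P) ∧ ∀ x ∈ D, x < a)) (fun D => D.Nonempty)]
  have hempty : (Finset.univ.filter (fun D : Finset P =>
      IsChain (· ≤ ·) (↑D : Set P) ∧ ∀ x ∈ D, x < a)).filter (fun D => ¬ D.Nonempty)
      = {(∅ : Finset P)} := by
    ext D
    simp only [Finset.mem_filter, Finset.mem_univ, true_and, Finset.mem_singleton,
      Finset.not_nonempty_iff_eq_empty]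
    constructor
    · rintro ⟨-, h⟩; exact h
    · rintro rfl
      refine ⟨⟨?_, ?_⟩, rfl⟩
      · simp
      · simp
  have hfil : (Finset.univ.filter (fun D : Finset P =>
      IsChain (· ≤ ·) (↑D : Set P) ∧ ∀ x ∈ D, x < a)).filter (fun D => D.Nonempty)
      = Finset.univ.filter (fun C : Finset P =>
          C.Nonempty ∧ IsChain (· ≤ ·) (↑C : Set P) ∧ ∀ x ∈ C, x < a) := by
    ext D
    simp only [Finset.mem_filter, Finset.mem_univ, true_and]
    tauto
  rw [hempty, hfil, Finset.sum_singleton]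
  have hsum : ∑ D ∈ Finset.univ.filter (fun C : Finset P =>
          C.Nonempty ∧ IsChain (· ≤ ·) (↑C : Set P) ∧ ∀ x ∈ C, x < a), (-1 : ℤ) ^ D.card
      = - chainSum (fun C => ∀ x ∈ C, x < a) := by
    rw [chainSum, ← Finset.sum_neg_distrib]
    refine Finset.sum_congr ?_ fun D hD => ?_
    · ext D; simp only [Finset.mem_filter]
    simp only [Finset.mem_filter] at hD
    obtain ⟨-, hne, -, -⟩ := hD
    obtain ⟨m, hm⟩ : ∃ m, D.card = m + 1 :=
      ⟨D.card - 1, (Nat.succ_pred_eq_of_pos (Finset.card_pos.2 hne)).symm⟩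
    rw [hm]
    simp [pow_succ]
  rw [hsum]
  simp
  ring

theorem stmt16 [PartialOrder P] [Fintype P] (hw : TwoWide P) (μ : P → ℕ)
    (hμ : ParityRank μ) (hE : DownEulerian μ) (f : P → ℝ) (hf : IsDMF f) :
    ((Finset.univ.filter (fun x : P => μ x = 0 ∧ IsCrit f x)).card : ℤ) -
      ((Finset.univ.filter (fun x : P => μ x = 1 ∧ IsCrit f x)).card : ℤ) =
      chainSum (P := P) (fun _ => True) := by
  classical
  obtain ⟨hμ1, hμmin, hμcov⟩ := hμ
  -- Step A : chainSum True = ∑ a, (-1)^(μ a)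
  have hstepA : chainSum (P := P) (fun _ => True) = ∑ a : P, (-1 : ℤ) ^ (μ a) := by
    have h1 : chainSum (P := P) (fun _ => True)
        = ∑ C ∈ Finset.univ.filter
            (fun C : Finset P => C.Nonempty ∧ IsChain (· ≤ ·) (↑C : Set P) ∧ True),
          ∑ a : P, if a ∈ C ∧ ∀ x ∈ C, x ≤ a then (-1 : ℤ) ^ (C.card - 1) else 0 := by
      rw [chainSum]
      refine Finset.sum_congr ?_ fun C hC => ?_
      · ext D; simp only [Finset.mem_filter]
      obtain ⟨-, hne, hch, -⟩ := Finset.mem_filter.1 hC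
      obtain ⟨m, hm, hmax⟩ := C.exists_maximal hne
      have hmle : ∀ x ∈ C, x ≤ m := by
        intro x hx
        rcases eq_or_ne x m with rfl | hxm
        · exact le_rfl
        · rcases hch (Finset.mem_coe.2 hx) (Finset.mem_coe.2 hm) hxm with h | h
          · exact h
          · exact absurd (lt_of_le_of_ne h hxm.symm) (fun hlt => hlt.not_ge (hmax hx h))
      refine Eq.symm ?_
      rw [Finset.sum_eq_single m (fun b _ hbm => if_neg (fun hpb =>
        hbm (le_antisymm (hmle b hpb.1) (hpb.2 m hm)))) (fun hm' => absurd (Finset.mem_univ m) hm'),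
        if_pos ⟨hm, hmle⟩]
    rw [h1, Finset.sum_comm]
    refine Finset.sum_congr rfl fun a _ => ?_
    rw [← Finset.sum_filter, Finset.filter_filter]
    refine Eq.trans ((Finset.sum_congr ?_ (fun _ _ => rfl)).trans (fiber_aux a)) ?_
    · ext D; simp only [Finset.mem_filter]
    by_cases hmin : IsMin a
    · have hzero : chainSum (P := P) (fun C => ∀ x ∈ C, x < a) = 0 := by
        rw [chainSum]
        apply Finset.sum_eq_zero
        intro C hC
        simp only [Finset.mem_filter] at hC
        obtain ⟨-, ⟨x, hx⟩, -, hlt⟩ := hC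
        exact absurd (hlt x hx) (fun h => h.not_ge (hmin h.le))
      rw [hzero, hμmin a hmin]
      norm_num
    · rw [hE a hmin]
      rcases Nat.le_one_iff_eq_zero_or_eq_one.1 (hμ1 a) with h | h <;> rw [h] <;> norm_num
  -- Step B : split ∑ a, (-1)^(μ a) into critical and non-critical parts
  have hsplit : ∑ a : P, (-1 : ℤ) ^ (μ a)
      = ∑ a ∈ Finset.univ.filter (fun x => IsCrit f x), (-1 : ℤ) ^ (μ a)
        + ∑ a ∈ Finset.univ.filter (fun x => ¬ IsCrit f x), (-1 : ℤ) ^ (μ a) :=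
    (Finset.sum_filter_add_sum_filter_not _ _ _).symm
  -- non-critical part vanishes by the involution given by the Morse matching
  have hnc : ∑ a ∈ Finset.univ.filter (fun x => ¬ IsCrit f x), (-1 : ℤ) ^ (μ a) = 0 := by
    have hspec : ∀ (x : P) (hx : x ∈ Finset.univ.filter (fun x => ¬ IsCrit f x)),
        ∃! y, (x ⋖ y ∧ f y ≤ f x) ∨ (y ⋖ x ∧ f x ≤ f y) :=
      fun x hx => eum_aux hw hf (Finset.mem_filter.1 hx).2
    refine Finset.sum_involution (fun x hx => (hspec x hx).choose) ?_ ?_ ?_ ?_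
    · intro x hx
      have hM := (hspec x hx).choose_spec.1
      have hflip : μ x = 0 ∧ μ ((hspec x hx).choose) = 1 ∨
          μ x = 1 ∧ μ ((hspec x hx).choose) = 0 := by
        rcases hM with ⟨hcov, -⟩ | ⟨hcov, -⟩
        · have := hμcov _ _ hcov
          have h1 := hμ1 x
          omega
        · have := hμcov _ _ hcov
          have h1 := hμ1 ((hspec x hx).choose)
          omega
      rcases hflip with ⟨h0, h1⟩ | ⟨h0, h1⟩ <;> rw [h0, h1] <;> norm_num
    · intro x hx _
      intro heq
      have heq' : (hspec x hx).choose = x := heq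
      have hM := (hspec x hx).choose_spec.1
      rcases hM with ⟨hcov, -⟩ | ⟨hcov, -⟩ <;> rw [heq'] at hcov <;>
        exact lt_irrefl x hcov.lt
    · intro x hx
      have hM := (hspec x hx).choose_spec.1
      refine Finset.mem_filter.2 ⟨Finset.mem_univ _, ?_⟩
      rcases hM with ⟨hcov, hle⟩ | ⟨hcov, hle⟩
      · exact fun hcrit => absurd (hcrit.1 x hcov) (not_lt.2 hle)
      · exact fun hcrit => absurd (hcrit.2 x hcov) (not_lt.2 hle)
    · intro x hx
      -- g (g x) = x
      set y := (hspec x hx).choose with hy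
      have hM : (x ⋖ y ∧ f y ≤ f x) ∨ (y ⋖ x ∧ f x ≤ f y) := (hspec x hx).choose_spec.1
      have hMyx : (y ⋖ x ∧ f x ≤ f y) ∨ (x ⋖ y ∧ f y ≤ f x) := hM.symm
      exact ((hspec y (by
        have hMy := hM
        refine Finset.mem_filter.2 ⟨Finset.mem_univ _, ?_⟩
        rcases hMy with ⟨hcov, hle⟩ | ⟨hcov, hle⟩
        · exact fun hcrit => absurd (hcrit.1 x hcov) (not_lt.2 hle)
        · exact fun hcrit => absurd (hcrit.2 x hcov) (not_lt.2 hle))).choose_spec.2 x hMyx).symm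
  -- critical part
  have hc : ∑ a ∈ Finset.univ.filter (fun x => IsCrit f x), (-1 : ℤ) ^ (μ a)
      = ((Finset.univ.filter (fun x : P => μ x = 0 ∧ IsCrit f x)).card : ℤ)
        - ((Finset.univ.filter (fun x : P => μ x = 1 ∧ IsCrit f x)).card : ℤ) := by
    rw [← Finset.sum_filter_add_sum_filter_not
      (Finset.univ.filter (fun x => IsCrit f x)) (fun x => μ x = 0)]
    have e0 : (Finset.univ.filter (fun x => IsCrit f x)).filter (fun x => μ x = 0)
        = Finset.univ.filter (fun x : P => μ x = 0 ∧ IsCrit f x) := by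
      rw [Finset.filter_filter]
      exact Finset.filter_congr (fun x _ => and_comm)
    have e1 : (Finset.univ.filter (fun x => IsCrit f x)).filter (fun x => ¬ μ x = 0)
        = Finset.univ.filter (fun x : P => μ x = 1 ∧ IsCrit f x) := by
      rw [Finset.filter_filter]
      refine Finset.filter_congr (fun x _ => ?_)
      have := hμ1 x
      constructor
      · rintro ⟨hcrit, hne⟩; exact ⟨by omega, hcrit⟩
      · rintro ⟨h1, hcrit⟩; exact ⟨hcrit, by omega⟩
    rw [e0, e1]
    have s0 : ∑ a ∈ Finset.univ.filter (fun x : P => μ x = 0 ∧ IsCrit f x), (-1 : ℤ) ^ (μ a)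
        = ((Finset.univ.filter (fun x : P => μ x = 0 ∧ IsCrit f x)).card : ℤ) := by
      rw [Finset.sum_congr rfl (fun x hx => by
        rw [(Finset.mem_filter.1 hx).2.1, pow_zero]), Finset.sum_const, nsmul_eq_mul, mul_one]
    have s1 : ∑ a ∈ Finset.univ.filter (fun x : P => μ x = 1 ∧ IsCrit f x), (-1 : ℤ) ^ (μ a)
        = -((Finset.univ.filter (fun x : P => μ x = 1 ∧ IsCrit f x)).card : ℤ) := by
      rw [Finset.sum_congr rfl (fun x hx => by
        rw [(Finset.mem_filter.1 hx).2.1, pow_one]), Finset.sum_const, nsmul_eq_mul, mul_neg_one]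
    rw [s0, s1]
    ring
  rw [hstepA, hsplit, hnc, hc]
  ring
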